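/- Let C > 0 and let ψ : ℝ → ℝ be C² with 0 ≤ ψ ≤ 1, ψ″(r) ≥ −C for all r, ψ′(r)² ≤ C·ψ(r) for all r, and ψ(r) = 0 for all r ≥ 1. Fix n ≥ 1 and R > 0 and define g : ℝⁿ → ℝ (Euclidean space) by g(x) = ψ(‖x‖²/R²). Then for every x ∈ ℝⁿ the Laplacian of g (the trace of its Hessian, i.e. the sum of its second partial derivatives) satisfies Δg(x) ≥ −(4C + 2n·√C)/R². -/

import Mathlib

/-- The Laplacian of `f : ℝⁿ → ℝ` at `x`: the trace of the Hessian, i.e. the sum of the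
second partial derivatives in the coordinate directions. -/
noncomputable def euclideanLaplacian {n : ℕ} (f : EuclideanSpace ℝ (Fin n) → ℝ)
    (x : EuclideanSpace ℝ (Fin n)) : ℝ :=
  ∑ i : Fin n,
    fderiv ℝ (fun y => fderiv ℝ f y (EuclideanSpace.single i (1 : ℝ))) x
      (EuclideanSpace.single i (1 : ℝ))

/-- Laplacian lower bound for the localization `g(x) = ψ(‖x‖²/R²)` built from a `C²` cutoff
`ψ` with `0 ≤ ψ ≤ 1`, `ψ'' ≥ −C`, `(ψ')² ≤ C·ψ` and `ψ = 0` on `[1,∞)`: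
`Δg ≥ −(4C + 2n√C)/R²` everywhere on ℝⁿ. -/
theorem laplacian_lower_bound_of_cutoff
    {C : ℝ} (hC : 0 < C) (ψ : ℝ → ℝ)
    (hψ : ContDiff ℝ 2 ψ)
    (h01 : ∀ r : ℝ, 0 ≤ ψ r ∧ ψ r ≤ 1)
    (hψ'' : ∀ r : ℝ, -C ≤ deriv (deriv ψ) r)
    (hψ' : ∀ r : ℝ, (deriv ψ r) ^ 2 ≤ C * ψ r)
    (hzero : ∀ r : ℝ, 1 ≤ r → ψ r = 0)
    (n : ℕ) (hn : 1 ≤ n) (R : ℝ) (hR : 0 < R) :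
    ∀ x : EuclideanSpace ℝ (Fin n),
      -((4 * C + 2 * n * Real.sqrt C) / R ^ 2) ≤
        euclideanLaplacian (fun y : EuclideanSpace ℝ (Fin n) => ψ (‖y‖ ^ 2 / R ^ 2)) x := by
  intro x
  have hR2 : (0:ℝ) < R ^ 2 := by positivity
  have hdψ : Differentiable ℝ ψ := hψ.differentiable (by norm_num)
  have hdψ' : Differentiable ℝ (deriv ψ) := by
    have := (contDiff_succ_iff_deriv (n := 1)).mp (by exact_mod_cast hψ)
    exact this.2.2.differentiable (by norm_num)
  set q : EuclideanSpace ℝ (Fin n) → ℝ := fun y => ‖y‖ ^ 2 / R ^ 2 with hqdef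
  -- derivative of q
  have hq : ∀ y : EuclideanSpace ℝ (Fin n),
      HasFDerivAt q ((R ^ 2)⁻¹ • ((2:ℕ) • (innerSL ℝ y))) y := by
    intro y
    have h := (hasStrictFDerivAt_norm_sq y).hasFDerivAt.const_mul (R ^ 2)⁻¹
    simpa [hqdef, div_eq_inv_mul] using h
  -- first derivative of g
  have hg : ∀ y : EuclideanSpace ℝ (Fin n),
      HasFDerivAt (fun y : EuclideanSpace ℝ (Fin n) => ψ (q y))
      (deriv ψ (q y) • ((R ^ 2)⁻¹ • ((2:ℕ) • (innerSL ℝ y)))) y := by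
    intro y
    exact ((hdψ (q y)).hasDerivAt).comp_hasFDerivAt y (hq y)
  -- first derivative along e_i as a function
  have hg1 : ∀ (i : Fin n),
      (fun y : EuclideanSpace ℝ (Fin n) =>
          fderiv ℝ (fun y : EuclideanSpace ℝ (Fin n) => ψ (q y)) y (EuclideanSpace.single i (1:ℝ)))
        = fun y : EuclideanSpace ℝ (Fin n) => deriv ψ (q y) * (2 / R ^ 2 * y i) := by
    intro i
    funext y
    rw [(hg y).fderiv]
    simp [EuclideanSpace.inner_single_right]
    ring_nf
    tauto
  -- second derivative entries
  have hsecond : ∀ i : Fin n,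
      fderiv ℝ (fun y : EuclideanSpace ℝ (Fin n) =>
          fderiv ℝ (fun y : EuclideanSpace ℝ (Fin n) => ψ (q y)) y (EuclideanSpace.single i (1:ℝ)))
        x (EuclideanSpace.single i (1:ℝ))
      = deriv (deriv ψ) (q x) * (2 / R ^ 2 * x i) * (2 / R ^ 2 * x i)
        + deriv ψ (q x) * (2 / R ^ 2) := by
    intro i
    rw [hg1 i]
    have hA : HasFDerivAt (fun y : EuclideanSpace ℝ (Fin n) => deriv ψ (q y))
        (deriv (deriv ψ) (q x) • ((R ^ 2)⁻¹ • ((2:ℕ) • (innerSL ℝ x)))) x :=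
      ((hdψ' (q x)).hasDerivAt).comp_hasFDerivAt x (hq x)
    have hB : HasFDerivAt (fun y : EuclideanSpace ℝ (Fin n) => (2 / R ^ 2) * y i)
        ((2 / R ^ 2) • (EuclideanSpace.proj (𝕜 := ℝ) (ι := Fin n) i)) x := by
      have h := ContinuousLinearMap.hasFDerivAt (𝕜 := ℝ)
        (f := EuclideanSpace.proj (𝕜 := ℝ) (ι := Fin n) i) (x := x)
      exact h.const_mul (2 / R ^ 2)
    have hF := hA.mul hB
    rw [show (fun y : EuclideanSpace ℝ (Fin n) => deriv ψ (q y) * (2 / R ^ 2 * y i)) = ((fun y : EuclideanSpace ℝ (Fin n) => deriv ψ (q y)) * fun y : EuclideanSpace ℝ (Fin n) => 2 / R ^ 2 * y i) from rfl, hF.fderiv]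
    simp [EuclideanSpace.inner_single_right]
    ring
  -- the Laplacian formula
  have hx2 : ‖x‖ ^ 2 = ∑ i : Fin n, (x i) ^ 2 := by
    rw [EuclideanSpace.norm_eq, Real.sq_sqrt (by positivity)]
    simp [Real.norm_eq_abs, sq_abs]
  have hsum : euclideanLaplacian (fun y : EuclideanSpace ℝ (Fin n) => ψ (‖y‖ ^ 2 / R ^ 2)) x
      = deriv (deriv ψ) (q x) * (4 * ‖x‖ ^ 2 / R ^ 4)
        + deriv ψ (q x) * (2 * n / R ^ 2) := by
    unfold euclideanLaplacian
    calc (∑ i : Fin n,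
        fderiv ℝ (fun y : EuclideanSpace ℝ (Fin n) =>
            fderiv ℝ (fun y : EuclideanSpace ℝ (Fin n) => ψ (q y)) y
              (EuclideanSpace.single i (1:ℝ)))
          x (EuclideanSpace.single i (1:ℝ)))
        = ∑ i : Fin n, (deriv (deriv ψ) (q x) * (4 / R ^ 4) * (x i) ^ 2
            + deriv ψ (q x) * (2 / R ^ 2)) := by
          refine Finset.sum_congr rfl (fun i _ => ?_)
          rw [hsecond i]; ring
      _ = deriv (deriv ψ) (q x) * (4 / R ^ 4) * (∑ i : Fin n, (x i) ^ 2)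
            + (n : ℝ) * (deriv ψ (q x) * (2 / R ^ 2)) := by
          rw [Finset.sum_add_distrib, ← Finset.mul_sum, Finset.sum_const, Finset.card_univ]
          simp [nsmul_eq_mul]
      _ = _ := by rw [← hx2]; ring
  rw [hsum]
  -- now the inequality
  set s' := deriv ψ (q x) with hs'def
  set s'' := deriv (deriv ψ) (q x) with hs''def
  have hsqrtC : (0:ℝ) ≤ Real.sqrt C := Real.sqrt_nonneg C
  have hN : (0:ℝ) ≤ ‖x‖ ^ 2 := by positivity
  have hn' : (1:ℝ) ≤ (n:ℝ) := by exact_mod_cast hn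
  by_cases hcase : ‖x‖ ^ 2 ≤ R ^ 2
  · have hs'' : -C ≤ s'' := hψ'' (q x)
    have hs' : -Real.sqrt C ≤ s' := by
      have h1 : s' ^ 2 ≤ C := by
        have h3 := hψ' (q x)
        have h2 := (h01 (q x)).2
        nlinarith [(h01 (q x)).1]
      have h2 : |s'| ≤ Real.sqrt C := by
        rw [← Real.sqrt_sq_eq_abs]
        exact Real.sqrt_le_sqrt h1
      linarith [neg_abs_le s']
    have hnum : 0 ≤ s'' * (4 * ‖x‖ ^ 2) + s' * (2 * n) * R ^ 2
        + (4 * C + 2 * n * Real.sqrt C) * R ^ 2 := by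
      have p1 : -C * (4 * ‖x‖ ^ 2) ≤ s'' * (4 * ‖x‖ ^ 2) := by nlinarith
      have p2 : -C * (4 * R ^ 2) ≤ -C * (4 * ‖x‖ ^ 2) := by nlinarith
      have p3 : -Real.sqrt C * (2 * n) * R ^ 2 ≤ s' * (2 * n) * R ^ 2 := by
        nlinarith [mul_le_mul_of_nonneg_right hs' (show (0:ℝ) ≤ 2 * (n:ℝ) * R ^ 2 by positivity)]
      nlinarith
    have heq : s'' * (4 * ‖x‖ ^ 2 / R ^ 4) + s' * (2 * n / R ^ 2)
        + (4 * C + 2 * n * Real.sqrt C) / R ^ 2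
        = (s'' * (4 * ‖x‖ ^ 2) + s' * (2 * n) * R ^ 2
            + (4 * C + 2 * n * Real.sqrt C) * R ^ 2) / R ^ 4 := by
      field_simp
    have hdiv : 0 ≤ (s'' * (4 * ‖x‖ ^ 2) + s' * (2 * n) * R ^ 2
        + (4 * C + 2 * n * Real.sqrt C) * R ^ 2) / R ^ 4 :=
      div_nonneg hnum (by positivity)
    linarith [heq, hdiv]
  · push_neg at hcase
    have hq1 : 1 < q x := by
      have h : (1:ℝ) < ‖x‖ ^ 2 / R ^ 2 := by
        rw [lt_div_iff₀ hR2]; simpa using hcase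
      simpa [hqdef] using h
    have hd0 : ∀ r : ℝ, 1 ≤ r → deriv ψ r = 0 := by
      intro r hr
      have h1 := hψ' r
      rw [hzero r hr] at h1
      have h2 : deriv ψ r ^ 2 = 0 := le_antisymm (by linarith) (sq_nonneg _)
      exact pow_eq_zero_iff (two_ne_zero) |>.mp h2
    have hs'0 : s' = 0 := hd0 (q x) hq1.le
    have hs''0 : s'' = 0 := by
      have hev : deriv ψ =ᶠ[nhds (q x)] (fun _ => (0:ℝ)) := by
        filter_upwards [Ioi_mem_nhds hq1] with r hr
        exact hd0 r (le_of_lt hr)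
      rw [hs''def, hev.deriv_eq]
      simp
    rw [hs'0, hs''0]
    have hK : 0 ≤ (4 * C + 2 * n * Real.sqrt C) / R ^ 2 := by positivity
    have h0 : (0:ℝ) * (4 * ‖x‖ ^ 2 / R ^ 4) + 0 * (2 * (n:ℝ) / R ^ 2) = 0 := by ring
    linarith
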